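/- arXiv:2208.09309 — 2 statements merged into one kernel-verified Lean document; each statement's English description precedes it below -/
import Mathlib

section
/- For a two-layer linear sheaf convolutional network with identity activation, the neural tangent kernel simplifies to Θ̄(F,F') = Σ_{l=1}^{L+1} D^l X X'ᵀ (D'ᵀ)^l ⊙ (D D'ᵀ)^{⊙(L+1−l)}, where ⊙ denotes the Hadamard product and A^{⊙k} the Hadamard power; in particular each summand is a positive semidefinite matrix when F = F' (so D = D', X = X'). -/
open Matrix Finset

open scoped Matrix in
/-- The neural tangent kernel of a linear (identity-activation) sheaf convolutional
network of depth `L`. -/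
noncomputable def linearSheafNTK {N d : ℕ}
    (D D' : Matrix (Fin N) (Fin N) ℝ) (X X' : Matrix (Fin N) (Fin d) ℝ) (L : ℕ) :
    Matrix (Fin N) (Fin N) ℝ :=
  ∑ l ∈ Finset.Icc 1 (L + 1),
    (D ^ l * X * X'ᵀ * (D'ᵀ) ^ l) ⊙ (Matrix.of fun i j => ((D * D'ᵀ) i j) ^ (L + 1 - l))

/-- A real Gram matrix is positive semidefinite. -/
lemma posSemidef_gram {n ι : Type*} [Fintype n] [Fintype ι] (f : n → ι → ℝ) :
    (Matrix.of fun i j => ∑ s, f i s * f j s).PosSemidef := by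
  have h := Matrix.posSemidef_self_mul_conjTranspose (Matrix.of f)
  convert h using 2
  ext i j
  simp [Matrix.mul_apply, Matrix.conjTranspose_apply]

open scoped Matrix in
/-- For a linear sheaf convolutional network with identity activation, the NTK
simplifies to `Θ̄(F,F') = Σ_{l=1}^{L+1} D^l X X'ᵀ (D'ᵀ)^l ⊙ (D D'ᵀ)^{⊙(L+1-l)}`
(`⊙` the Hadamard product, `(·)^{⊙k}` the Hadamard power); in particular, each
summand is positive semidefinite when `F = F'` (so `D = D'`, `X = X'`). -/
theorem linearSheafNTK_eq_sum_and_summands_posSemidef {N d : ℕ}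
    (D D' : Matrix (Fin N) (Fin N) ℝ) (X X' : Matrix (Fin N) (Fin d) ℝ) (L : ℕ) :
    linearSheafNTK D D' X X' L =
      ∑ l ∈ Finset.Icc 1 (L + 1),
        (D ^ l * X * X'ᵀ * (D'ᵀ) ^ l) ⊙
          (Matrix.of fun i j => ((D * D'ᵀ) i j) ^ (L + 1 - l)) ∧
    ∀ l ∈ Finset.Icc 1 (L + 1),
      ((D ^ l * X * Xᵀ * (Dᵀ) ^ l) ⊙
          (Matrix.of fun i j => ((D * Dᵀ) i j) ^ (L + 1 - l))).PosSemidef := by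
  refine ⟨rfl, fun l _ => ?_⟩
  set k := L + 1 - l with hk
  set M := D ^ l * X with hM
  have key := posSemidef_gram
    (fun (i : Fin N) (p : Fin d × (Fin k → Fin N)) => M i p.1 * ∏ t, D i (p.2 t))
  convert key using 1
  ext i j
  have hA : (D ^ l * X * Xᵀ * (Dᵀ) ^ l) i j = ∑ c, M i c * M j c := by
    have : D ^ l * X * Xᵀ * (Dᵀ) ^ l = M * Mᵀ := by
      rw [hM, Matrix.transpose_mul, Matrix.transpose_pow]
      rw [Matrix.mul_assoc]
    rw [this, Matrix.mul_apply]
    simp [Matrix.transpose_apply]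
  have hB : ((D * Dᵀ) i j) ^ k = ∑ g : Fin k → Fin N, ∏ t, D i (g t) * D j (g t) := by
    rw [Matrix.mul_apply]
    simp only [Matrix.transpose_apply]
    exact Fintype.sum_pow _ k
  rw [← hM] at hA
  simp only [Matrix.hadamard_apply, Matrix.of_apply, hA, hB]
  rw [Finset.sum_mul_sum, Fintype.sum_prod_type]
  refine Finset.sum_congr rfl fun c _ => Finset.sum_congr rfl fun g _ => ?_
  simp only [Finset.prod_mul_distrib]
  ring
end

section
/- For a graph G with stationary distribution π (of the lazy random walk) and Cheeger constant h(G) > 0, the spectral gap λ of the normalized Laplacian satisfies h(G)²/2 ≤ λ ≤ 2h(G) (Cheeger's inequality). -/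
open Matrix Finset

variable {V : Type*} [Fintype V] [DecidableEq V]

/-- The number of edges from `S` to its complement. -/
def edgeBoundary (G : SimpleGraph V) [DecidableRel G.Adj] (S : Finset V) : ℕ :=
  ∑ u ∈ S, ∑ v ∈ Sᶜ, if G.Adj u v then 1 else 0

/-- The volume of a vertex subset: the sum of its degrees. -/
def volume (G : SimpleGraph V) [DecidableRel G.Adj] (S : Finset V) : ℕ :=
  ∑ u ∈ S, G.degree u

/-- The Cheeger constant `h(G) = min_S |∂S| / min(vol S, vol Sᶜ)` over nonempty proper
vertex subsets `S`. -/
noncomputable def cheegerConst (G : SimpleGraph V) [DecidableRel G.Adj] : ℝ :=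
  sInf {r : ℝ | ∃ S : Finset V, S.Nonempty ∧ S ≠ Finset.univ ∧
    r = (edgeBoundary G S : ℝ) / min (volume G S : ℝ) (volume G Sᶜ : ℝ)}

lemma ch_deg_pos (G : SimpleGraph V) [DecidableRel G.Adj] [Nontrivial V]
    (hconn : G.Connected) (v : V) : 0 < G.degree v := by
  rw [SimpleGraph.degree_pos_iff_exists_adj]
  obtain ⟨u, hu⟩ := exists_ne v
  obtain ⟨w⟩ := hconn.preconnected v u
  cases w with
  | nil => exact absurd rfl hu.symm
  | cons h _ => exact ⟨_, h⟩

lemma ch_rowsum (G : SimpleGraph V) [DecidableRel G.Adj] (v : V) :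
    ∑ u, (if G.Adj v u then (1:ℝ) else 0) = (G.degree v : ℝ) := by
  rw [Finset.sum_boole]
  norm_num [SimpleGraph.degree, SimpleGraph.neighborFinset_eq_filter]

lemma ch_swap (G : SimpleGraph V) [DecidableRel G.Adj] (F : V → V → ℝ) :
    ∑ v, ∑ u, (if G.Adj v u then F v u else 0)
      = ∑ v, ∑ u, (if G.Adj v u then F u v else 0) := by
  rw [Finset.sum_comm]
  refine Finset.sum_congr rfl fun v _ => Finset.sum_congr rfl fun u _ => ?_
  exact if_congr (G.adj_comm u v) rfl rfl

lemma ch_key_identity (G : SimpleGraph V) [DecidableRel G.Adj] (g : V → ℝ) :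
    ∑ v, ∑ u, (if G.Adj v u then (g v - g u)^2 else 0)
      = 2 * ∑ v, ∑ u, (if G.Adj v u then g v * (g v - g u) else 0) := by
  have h1 : ∀ v u : V, (if G.Adj v u then (g v - g u)^2 else 0)
      = (if G.Adj v u then g v * (g v - g u) else 0)
        + (if G.Adj v u then g u * (g u - g v) else 0) := by
    intro v u; by_cases h : G.Adj v u <;> simp [h] <;> ring
  simp_rw [h1, Finset.sum_add_distrib]
  rw [ch_swap G (fun v u => g u * (g u - g v))]
  ring

lemma ch_eigen (G : SimpleGraph V) [DecidableRel G.Adj]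
    (hd : ∀ w : V, 0 < (G.degree w : ℝ)) {lam : ℝ} {normL : Matrix V V ℝ}
    (hnormL : normL = 1 - Matrix.of fun u v =>
      (G.adjMatrix ℝ) u v / Real.sqrt ((G.degree u : ℝ) * (G.degree v : ℝ)))
    {x : V → ℝ} (hx : normL.mulVec x = lam • x) (v : V) :
    (G.degree v : ℝ) * (x v / Real.sqrt (G.degree v))
      - ∑ u, (if G.Adj v u then x u / Real.sqrt (G.degree u) else 0)
      = lam * ((G.degree v : ℝ) * (x v / Real.sqrt (G.degree v))) := by
  have hv := congrFun hx v
  rw [hnormL, sub_mulVec, one_mulVec] at hv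
  simp only [Pi.sub_apply, Pi.smul_apply, smul_eq_mul, mulVec, dotProduct, of_apply,
    SimpleGraph.adjMatrix_apply] at hv
  have sv : (0:ℝ) < Real.sqrt (G.degree v) := Real.sqrt_pos.mpr (hd v)
  have key : ∀ u, (if G.Adj v u then x u / Real.sqrt (G.degree u) else 0)
      = Real.sqrt (G.degree v) *
        ((if G.Adj v u then (1:ℝ) else 0) / Real.sqrt ((G.degree v : ℝ) * (G.degree u : ℝ)) * x u) := by
    intro u
    have su : (0:ℝ) < Real.sqrt (G.degree u) := Real.sqrt_pos.mpr (hd u)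
    rw [Real.sqrt_mul (by positivity)]
    by_cases h : G.Adj v u
    · simp only [h, if_true]
      field_simp
    · simp [h]
  have hxv : (G.degree v : ℝ) * (x v / Real.sqrt (G.degree v))
      = Real.sqrt (G.degree v) * x v := by
    field_simp
    nth_rewrite 1 [← Real.sq_sqrt (le_of_lt (hd v))]
    ring
  rw [hxv]
  simp_rw [key]
  rw [← Finset.mul_sum]
  linear_combination Real.sqrt (G.degree v) * hv

lemma ch_dot_normL (G : SimpleGraph V) [DecidableRel G.Adj] {normL : Matrix V V ℝ}
    (hnormL : normL = 1 - Matrix.of fun u v =>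
      (G.adjMatrix ℝ) u v / Real.sqrt ((G.degree u : ℝ) * (G.degree v : ℝ)))
    (z y : V → ℝ) :
    z ⬝ᵥ (normL.mulVec y) = ∑ v, z v * y v
      - ∑ v, ∑ u, (if G.Adj v u then
          z v * y u / (Real.sqrt (G.degree v) * Real.sqrt (G.degree u)) else 0) := by
  rw [hnormL, sub_mulVec, one_mulVec]
  simp only [dotProduct, Pi.sub_apply, mulVec, of_apply, SimpleGraph.adjMatrix_apply]
  simp_rw [mul_sub, Finset.sum_sub_distrib, Finset.mul_sum]
  congr 1
  refine Finset.sum_congr rfl fun v _ => Finset.sum_congr rfl fun u _ => ?_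
  by_cases h : G.Adj v u
  · simp only [h, if_true]
    rw [Real.sqrt_mul (Nat.cast_nonneg _)]
    ring
  · simp [h]

lemma ch_quadform (G : SimpleGraph V) [DecidableRel G.Adj]
    (hd : ∀ w : V, 0 < (G.degree w : ℝ)) {normL : Matrix V V ℝ}
    (hnormL : normL = 1 - Matrix.of fun u v =>
      (G.adjMatrix ℝ) u v / Real.sqrt ((G.degree u : ℝ) * (G.degree v : ℝ)))
    (y : V → ℝ) (p : V → ℝ) (hp : ∀ w, p w = y w / Real.sqrt (G.degree w)) :
    y ⬝ᵥ (normL.mulVec y)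
      = (1/2) * ∑ v, ∑ u, (if G.Adj v u then (p v - p u)^2 else 0) := by
  rw [ch_dot_normL G hnormL y y, ch_key_identity G p]
  have h1 : ∀ v u : V, (if G.Adj v u then p v * (p v - p u) else 0)
      = (if G.Adj v u then p v * p v else 0)
        - (if G.Adj v u then y v * y u / (Real.sqrt (G.degree v) * Real.sqrt (G.degree u)) else 0) := by
    intro v u
    by_cases h : G.Adj v u
    · simp only [h, if_true, hp]
      rw [mul_sub]
      congr 1
      exact div_mul_div_comm _ _ _ _
    · simp [h]
  simp_rw [h1, Finset.sum_sub_distrib]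
  have h2 : ∀ v : V, ∑ u, (if G.Adj v u then p v * p v else 0) = y v * y v := by
    intro v
    have : ∀ u : V, (if G.Adj v u then p v * p v else 0)
        = p v * p v * (if G.Adj v u then (1:ℝ) else 0) := by
      intro u; by_cases h : G.Adj v u <;> simp [h]
    simp_rw [this, ← Finset.mul_sum, ch_rowsum G v, hp]
    have hv : (0:ℝ) < Real.sqrt (G.degree v) := Real.sqrt_pos.mpr (hd v)
    rw [div_mul_div_comm, Real.mul_self_sqrt (le_of_lt (hd v)),
      div_mul_cancel₀ _ (ne_of_gt (hd v))]
  simp_rw [h2]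
  ring

lemma ch_walk_const (G : SimpleGraph V) (p : V → ℝ)
    (h : ∀ a b, G.Adj a b → p a = p b) : ∀ {u v : V}, G.Walk u v → p u = p v := by
  intro u v w
  induction w with
  | nil => rfl
  | cons h' _ ih => exact (h _ _ h').trans ih

lemma ch_kernel (G : SimpleGraph V) [DecidableRel G.Adj]
    (hconn : G.Connected) (hd : ∀ w : V, 0 < (G.degree w : ℝ)) {normL : Matrix V V ℝ}
    (hnormL : normL = 1 - Matrix.of fun u v =>
      (G.adjMatrix ℝ) u v / Real.sqrt ((G.degree u : ℝ) * (G.degree v : ℝ)))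
    (u : V → ℝ) (hu : normL.mulVec u = 0) :
    ∃ s : ℝ, ∀ v, u v = s * Real.sqrt (G.degree v) := by
  set p : V → ℝ := fun w => u w / Real.sqrt (G.degree w) with hp
  have hq : (0:ℝ) = (1/2) * ∑ v, ∑ w, (if G.Adj v w then (p v - p w)^2 else 0) := by
    rw [← ch_quadform G hd hnormL u p (fun w => rfl), hu, dotProduct_zero]
  have hsum : ∑ v : V, ∑ w : V, (if G.Adj v w then (p v - p w)^2 else 0) = 0 := by
    linarith
  have hterm : ∀ v ∈ Finset.univ, ∀ w ∈ (Finset.univ : Finset V),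
      (if G.Adj v w then (p v - p w)^2 else 0) = 0 := by
    have h1 := (Finset.sum_eq_zero_iff_of_nonneg (fun v _ =>
      Finset.sum_nonneg fun w _ => by positivity)).mp hsum
    intro v hv w hw
    exact (Finset.sum_eq_zero_iff_of_nonneg (fun w _ => by positivity)).mp (h1 v hv) w hw
  have hadj : ∀ a b, G.Adj a b → p a = p b := by
    intro a b hab
    have := hterm a (Finset.mem_univ a) b (Finset.mem_univ b)
    rw [if_pos hab] at this
    have := pow_eq_zero_iff (n := 2) (by norm_num) |>.mp this
    linarith
  obtain ⟨v₀⟩ := hconn.nonempty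
  refine ⟨p v₀, fun v => ?_⟩
  have hpv : p v = p v₀ := ((hconn.preconnected v v₀).elim
    (fun w => ch_walk_const G p hadj w))
  have hs : Real.sqrt (G.degree v) ≠ 0 := ne_of_gt (Real.sqrt_pos.mpr (hd v))
  rw [← hpv, hp]
  field_simp

lemma ch_rayleigh (G : SimpleGraph V) [DecidableRel G.Adj]
    (hconn : G.Connected) (hd : ∀ w : V, 0 < (G.degree w : ℝ)) {normL : Matrix V V ℝ}
    (hnormL : normL = 1 - Matrix.of fun u v =>
      (G.adjMatrix ℝ) u v / Real.sqrt ((G.degree u : ℝ) * (G.degree v : ℝ)))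
    {lam : ℝ}
    (hmin : ∀ (μ : ℝ) (x : V → ℝ), x ≠ 0 → normL.mulVec x = μ • x → μ ≠ 0 → lam ≤ μ)
    (y : V → ℝ) (horth : ∑ v, Real.sqrt (G.degree v) * y v = 0) :
    lam * (y ⬝ᵥ y) ≤ y ⬝ᵥ normL.mulVec y := by
  have hH : normL.IsHermitian := by
    rw [hnormL]
    refine Matrix.isHermitian_one.sub ?_
    ext a b
    simp only [conjTranspose_apply, of_apply, SimpleGraph.adjMatrix_apply, star_trivial]
    exact congrArg₂ (· / ·) (if_congr (G.adj_comm b a) rfl rfl)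
      (by rw [mul_comm])
  set U : Matrix V V ℝ := (hH.eigenvectorUnitary : Matrix V V ℝ) with hUdef
  have hUT : star U = Uᵀ := by
    ext i j
    simp [Matrix.star_apply]
  have hUU : U * Uᵀ = 1 := by
    rw [← hUT]; exact Matrix.mem_unitaryGroup_iff.mp hH.eigenvectorUnitary.2
  have hU2 : Uᵀ * U = 1 := by
    rw [← hUT]; exact Matrix.mem_unitaryGroup_iff'.mp hH.eigenvectorUnitary.2
  have hUdot : ∀ a b : V → ℝ, (U *ᵥ a) ⬝ᵥ (U *ᵥ b) = a ⬝ᵥ b := by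
    intro a b
    rw [dotProduct_mulVec, ← transpose_transpose U, vecMul_transpose, transpose_transpose,
      mulVec_mulVec, hU2, one_mulVec]
  set c : V → ℝ := Uᵀ *ᵥ y with hc
  have hUc : U *ᵥ c = y := by rw [hc, mulVec_mulVec, hUU, one_mulVec]
  have hyy : y ⬝ᵥ y = c ⬝ᵥ c := by conv_lhs => rw [← hUc, hUdot c c]
  have hQ : y ⬝ᵥ normL.mulVec y = ∑ i, hH.eigenvalues i * c i ^ 2 := by
    have hnc : normL *ᵥ y = U *ᵥ ((Matrix.diagonal (RCLike.ofReal ∘ hH.eigenvalues)) *ᵥ c) := by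
      conv_lhs => rw [← hUc, hH.spectral_theorem, Unitary.conjStarAlgAut_apply, hUT]
      rw [mulVec_mulVec, mul_assoc (U * _) Uᵀ U, hU2, mul_one, ← mulVec_mulVec]
    conv_lhs => rw [hnc, ← hUc, hUdot]
    simp only [dotProduct, mulVec_diagonal, Function.comp_apply, RCLike.ofReal_real_eq_id,
      id_eq]
    exact Finset.sum_congr rfl fun i _ => by ring
  have hBU : ∀ i v : V, Uᵀ i v = (hH.eigenvectorBasis i : V → ℝ) v := by
    intro i v
    simp [hUdef, Matrix.transpose_apply]
  have hterm : ∀ i : V, lam * c i ^ 2 ≤ hH.eigenvalues i * c i ^ 2 := by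
    intro i
    by_cases hmu : hH.eigenvalues i = 0
    · have hmv := hH.mulVec_eigenvectorBasis i
      rw [hmu, zero_smul] at hmv
      obtain ⟨s, hs⟩ := ch_kernel G hconn hd hnormL _ hmv
      have hci : c i = 0 := by
        rw [hc]
        show ∑ v, Uᵀ i v * y v = 0
        calc ∑ v, Uᵀ i v * y v = ∑ v, s * (Real.sqrt (G.degree v) * y v) := by
              refine Finset.sum_congr rfl fun v _ => ?_
              rw [hBU i v, show (hH.eigenvectorBasis i : V → ℝ) v = s * Real.sqrt (G.degree v) from hs v]
              ring
          _ = 0 := by rw [← Finset.mul_sum, horth, mul_zero]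
      rw [hci]
      simp
    · have hle := hmin _ _ ?_ (hH.mulVec_eigenvectorBasis i) hmu
      · exact mul_le_mul_of_nonneg_right hle (sq_nonneg _)
      · intro h0
        apply hH.eigenvectorBasis.orthonormal.ne_zero i
        ext v
        exact congrFun h0 v
  calc lam * (y ⬝ᵥ y) = ∑ i, lam * c i ^ 2 := by
        rw [hyy]
        simp only [dotProduct]
        rw [Finset.mul_sum]
        exact Finset.sum_congr rfl fun i _ => by rw [sq]
    _ ≤ ∑ i, hH.eigenvalues i * c i ^ 2 := Finset.sum_le_sum fun i _ => hterm i
    _ = y ⬝ᵥ normL.mulVec y := hQ.symm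

lemma ch_upper (G : SimpleGraph V) [DecidableRel G.Adj]
    (hconn : G.Connected) (hdeg : ∀ v : V, 0 < G.degree v) {normL : Matrix V V ℝ}
    (hnormL : normL = 1 - Matrix.of fun u v =>
      (G.adjMatrix ℝ) u v / Real.sqrt ((G.degree u : ℝ) * (G.degree v : ℝ)))
    {lam : ℝ}
    (hmin : ∀ (μ : ℝ) (x : V → ℝ), x ≠ 0 → normL.mulVec x = μ • x → μ ≠ 0 → lam ≤ μ)
    (S : Finset V) (hS : S.Nonempty) (hSne : S ≠ Finset.univ) :
    lam ≤ 2 * ((edgeBoundary G S : ℝ) / min (volume G S : ℝ) (volume G Sᶜ : ℝ)) := by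
  have hd : ∀ w : V, 0 < (G.degree w : ℝ) := fun w => by exact_mod_cast hdeg w
  have hScne : Sᶜ.Nonempty := by
    have : ¬ ∀ x, x ∈ S := fun h => hSne (Finset.eq_univ_iff_forall.mpr h)
    push_neg at this
    obtain ⟨x, hx⟩ := this
    exact ⟨x, Finset.mem_compl.mpr hx⟩
  set a : ℝ := (volume G Sᶜ : ℝ) with ha
  set b : ℝ := (volume G S : ℝ) with hb
  have hbpos : 0 < b := by
    rw [hb]
    exact_mod_cast Finset.sum_pos (fun v _ => hdeg v) hS
  have hapos : 0 < a := by
    rw [ha]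
    exact_mod_cast Finset.sum_pos (fun v _ => hdeg v) hScne
  have hvolS : b = ∑ v ∈ S, (G.degree v : ℝ) := by rw [hb, volume]; push_cast; rfl
  have hvolSc : a = ∑ v ∈ Sᶜ, (G.degree v : ℝ) := by rw [ha, volume]; push_cast; rfl
  set c : V → ℝ := fun v => if v ∈ S then a else -b with hc
  set y : V → ℝ := fun v => Real.sqrt (G.degree v) * c v with hy
  have hsq : ∀ w : V, Real.sqrt (G.degree w) * Real.sqrt (G.degree w) = (G.degree w : ℝ) :=
    fun w => Real.mul_self_sqrt (le_of_lt (hd w))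
  have horth : ∑ v, Real.sqrt (G.degree v) * y v = 0 := by
    have : ∀ v : V, Real.sqrt (G.degree v) * y v = (G.degree v : ℝ) * c v := by
      intro v; rw [hy]; dsimp only; rw [← mul_assoc, hsq v]
    simp_rw [this]
    rw [← Finset.sum_add_sum_compl S]
    have h1 : ∑ v ∈ S, (G.degree v : ℝ) * c v = b * a := by
      rw [hvolS, Finset.sum_mul]
      refine Finset.sum_congr rfl fun v hv => ?_
      rw [hc]; simp [hv]
    have h2 : ∑ v ∈ Sᶜ, (G.degree v : ℝ) * c v = a * (-b) := by
      rw [hvolSc, Finset.sum_mul]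
      refine Finset.sum_congr rfl fun v hv => ?_
      have : v ∉ S := Finset.mem_compl.mp hv
      rw [hc]; simp [this]
    rw [h1, h2]; ring
  have hray := ch_rayleigh G hconn hd hnormL hmin y horth
  have hquad := ch_quadform G hd hnormL y c (fun w => by
    rw [hy]; dsimp only
    rw [mul_comm, mul_div_assoc, div_self (ne_of_gt (Real.sqrt_pos.mpr (hd w))), mul_one])
  -- compute y ⬝ᵥ y
  have hyy : y ⬝ᵥ y = a * b * (a + b) := by
    have hterm : ∀ v : V, y v * y v = (G.degree v : ℝ) * (c v * c v) := by
      intro v; rw [hy]; dsimp only; rw [mul_mul_mul_comm, hsq v]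
    rw [dotProduct]
    simp_rw [hterm]
    rw [← Finset.sum_add_sum_compl S]
    have h1 : ∑ v ∈ S, (G.degree v : ℝ) * (c v * c v) = b * (a * a) := by
      rw [hvolS, Finset.sum_mul]
      refine Finset.sum_congr rfl fun v hv => ?_
      rw [hc]; simp [hv]
    have h2 : ∑ v ∈ Sᶜ, (G.degree v : ℝ) * (c v * c v) = a * (b * b) := by
      rw [hvolSc, Finset.sum_mul]
      refine Finset.sum_congr rfl fun v hv => ?_
      have : v ∉ S := Finset.mem_compl.mp hv
      rw [hc]; simp [this]
    rw [h1, h2]; ring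
  -- compute the quadratic form
  set E : ℝ := (edgeBoundary G S : ℝ) with hE
  have hEb : E = ∑ v ∈ S, ∑ u ∈ Sᶜ, (if G.Adj v u then (1:ℝ) else 0) := by
    rw [hE, edgeBoundary]
    push_cast
    rfl
  have hEsym : ∑ v ∈ Sᶜ, ∑ u ∈ S, (if G.Adj v u then (1:ℝ) else 0)
      = ∑ v ∈ S, ∑ u ∈ Sᶜ, (if G.Adj v u then (1:ℝ) else 0) := by
    rw [Finset.sum_comm]
    exact Finset.sum_congr rfl fun v _ => Finset.sum_congr rfl fun u _ =>
      if_congr (G.adj_comm u v) rfl rfl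
  have hQval : ∑ v, ∑ u, (if G.Adj v u then (c v - c u)^2 else 0)
      = 2 * (a + b)^2 * E := by
    have split : ∀ v : V, ∑ u, (if G.Adj v u then (c v - c u)^2 else 0)
        = ∑ u ∈ S, (if G.Adj v u then (c v - c u)^2 else 0)
          + ∑ u ∈ Sᶜ, (if G.Adj v u then (c v - c u)^2 else 0) :=
      fun v => (Finset.sum_add_sum_compl S _).symm
    simp_rw [split]
    rw [Finset.sum_add_distrib, ← Finset.sum_add_sum_compl S
      (fun v => ∑ u ∈ S, (if G.Adj v u then (c v - c u)^2 else 0)),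
      ← Finset.sum_add_sum_compl S
      (fun v => ∑ u ∈ Sᶜ, (if G.Adj v u then (c v - c u)^2 else 0))]
    have hSS : ∑ v ∈ S, ∑ u ∈ S, (if G.Adj v u then (c v - c u)^2 else 0) = 0 := by
      refine Finset.sum_eq_zero fun v hv => Finset.sum_eq_zero fun u hu => ?_
      rw [hc]; simp [hv, hu]
    have hCC : ∑ v ∈ Sᶜ, ∑ u ∈ Sᶜ, (if G.Adj v u then (c v - c u)^2 else 0) = 0 := by
      refine Finset.sum_eq_zero fun v hv => Finset.sum_eq_zero fun u hu => ?_
      rw [hc]; simp [Finset.mem_compl.mp hv, Finset.mem_compl.mp hu]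
    have hSC : ∑ v ∈ S, ∑ u ∈ Sᶜ, (if G.Adj v u then (c v - c u)^2 else 0)
        = (a + b)^2 * E := by
      rw [hEb, Finset.mul_sum]
      refine Finset.sum_congr rfl fun v hv => ?_
      rw [Finset.mul_sum]
      refine Finset.sum_congr rfl fun u hu => ?_
      rw [hc]; simp only [hv, Finset.mem_compl.mp hu, if_true, if_false]
      by_cases h : G.Adj v u <;> simp [h] <;> ring
    have hCS : ∑ v ∈ Sᶜ, ∑ u ∈ S, (if G.Adj v u then (c v - c u)^2 else 0)
        = (a + b)^2 * E := by
      rw [hEb, ← hEsym, Finset.mul_sum]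
      refine Finset.sum_congr rfl fun v hv => ?_
      rw [Finset.mul_sum]
      refine Finset.sum_congr rfl fun u hu => ?_
      rw [hc]; simp only [hu, Finset.mem_compl.mp hv, if_true, if_false]
      by_cases h : G.Adj v u <;> simp [h] <;> ring
    rw [hSS, hCC, hSC, hCS]; ring
  rw [hquad, hyy, hQval] at hray
  -- hray : lam * (a*b*(a+b)) ≤ 1/2 * (2*(a+b)^2*E)
  have hEnn : 0 ≤ E := by rw [hE]; positivity
  have hlam : lam ≤ E / b + E / a := by
    rw [← le_div_iff₀ (by positivity : 0 < a * b * (a + b))] at hray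
    calc lam ≤ 1/2 * (2*(a+b)^2*E) / (a*b*(a+b)) := hray
      _ = E / b + E / a := by field_simp
  have hmin_le_b : min b a ≤ b := min_le_left _ _
  have hmin_le_a : min b a ≤ a := min_le_right _ _
  have hminpos : 0 < min b a := lt_min hbpos hapos
  have h1 : E / b ≤ E / min b a := div_le_div_of_nonneg_left hEnn hminpos hmin_le_b
  have h2 : E / a ≤ E / min b a := div_le_div_of_nonneg_left hEnn hminpos hmin_le_a
  linarith

open MeasureTheory in
lemma ch_int_indicator (T a b cc : ℝ) (ha : 0 ≤ a) (hb : b ≤ T) :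
    ∫ t in Set.Ioo (0:ℝ) T, (Set.Ico a b).indicator (fun _ => cc) t
      = cc * max (b - a) 0 := by
  rw [MeasureTheory.setIntegral_indicator measurableSet_Ico, MeasureTheory.setIntegral_const]
  rcases le_or_gt b a with h | h
  · rw [Set.Ico_eq_empty (not_lt.mpr h), Set.inter_empty]
    simp [max_eq_right (by linarith : b - a ≤ 0)]
  · have hba : 0 ≤ b - a := by linarith
    rw [max_eq_left hba]
    rcases eq_or_lt_of_le ha with h0 | h0
    · have hset : Set.Ioo (0:ℝ) T ∩ Set.Ico a b = Set.Ioo 0 b := by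
        ext x
        simp only [Set.mem_inter_iff, Set.mem_Ioo, Set.mem_Ico]
        constructor
        · rintro ⟨⟨h1, _⟩, _, h4⟩; exact ⟨h1, h4⟩
        · rintro ⟨h1, h2⟩
          exact ⟨⟨h1, lt_of_lt_of_le h2 hb⟩, by linarith, h2⟩
      rw [hset, Real.volume_real_Ioo_of_le (by linarith), smul_eq_mul]
      rw [← h0]; ring
    · have hset : Set.Ioo (0:ℝ) T ∩ Set.Ico a b = Set.Ico a b := by
        apply Set.inter_eq_right.mpr
        intro x hx
        exact ⟨lt_of_lt_of_le h0 hx.1, lt_of_lt_of_le hx.2 hb⟩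
      rw [hset, Real.volume_real_Ico_of_le h.le, smul_eq_mul, mul_comm]

lemma ch_Ecast (G : SimpleGraph V) [DecidableRel G.Adj] (S : Finset V) :
    (edgeBoundary G S : ℝ) = ∑ v ∈ S, ∑ u ∈ Sᶜ, (if G.Adj v u then (1:ℝ) else 0) := by
  rw [edgeBoundary]; push_cast; rfl

lemma ch_volcast (G : SimpleGraph V) [DecidableRel G.Adj] (S : Finset V) :
    (volume G S : ℝ) = ∑ v ∈ S, (G.degree v : ℝ) := by
  rw [volume]; push_cast; rfl

open MeasureTheory in
lemma ch_lower (G : SimpleGraph V) [DecidableRel G.Adj] (hdeg : ∀ v : V, 0 < G.degree v)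
    {lam : ℝ} (f : V → ℝ)
    (heq : ∀ v, (G.degree v : ℝ) * f v - ∑ u, (if G.Adj v u then f u else 0)
      = lam * ((G.degree v : ℝ) * f v))
    (hP : ∃ v, 0 < f v) (hN : ∃ v, f v < 0)
    (hvol : 2 * volume G (Finset.univ.filter (fun v => 0 < f v)) ≤ volume G Finset.univ) :
    ∃ S : Finset V, S.Nonempty ∧ S ≠ Finset.univ ∧
      ((edgeBoundary G S : ℝ) / min (volume G S : ℝ) (volume G Sᶜ : ℝ))^2 ≤ 2 * lam := by
  classical
  have hd : ∀ w : V, 0 < (G.degree w : ℝ) := fun w => by exact_mod_cast hdeg w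
  set g : V → ℝ := fun v => max (f v) 0 with hgdef
  have hg0 : ∀ v, 0 ≤ g v := fun v => le_max_right _ _
  have hgle : ∀ v, f v ≤ g v := fun v => le_max_left _ _
  have hgf : ∀ v, g v * f v = g v ^ 2 := by
    intro v
    rcases le_or_gt (f v) 0 with h | h
    · rw [hgdef]; dsimp only; rw [max_eq_right h]; ring
    · rw [hgdef]; dsimp only; rw [max_eq_left (le_of_lt h)]; ring
  have hgpos_iff : ∀ v, 0 < g v ↔ 0 < f v := by
    intro v
    constructor
    · intro h
      by_contra hh
      push_neg at hh
      rw [hgdef] at h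
      dsimp only at h
      rw [max_eq_right hh] at h
      exact lt_irrefl _ h
    · intro h; exact lt_of_lt_of_le h (hgle v)
  obtain ⟨p, hp⟩ := hP
  obtain ⟨nn, hnn⟩ := hN
  have hgp : 0 < g p := (hgpos_iff p).mpr hp
  have hgnn : g nn = 0 := by rw [hgdef]; dsimp only; exact max_eq_right hnn.le
  set M : ℝ := ∑ v, (G.degree v : ℝ) * g v ^ 2 with hMdef
  have hM : 0 < M := by
    rw [hMdef]
    refine Finset.sum_pos' (fun v _ => by positivity) ⟨p, Finset.mem_univ p, ?_⟩
    have := hd p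
    positivity
  -- rowsum identity
  have hrowM : ∑ v, ∑ u, (if G.Adj v u then g v ^ 2 else 0) = M := by
    rw [hMdef]
    refine Finset.sum_congr rfl fun v _ => ?_
    have h1 : ∀ u : V, (if G.Adj v u then g v ^ 2 else 0)
        = g v ^ 2 * (if G.Adj v u then (1:ℝ) else 0) := by
      intro u; by_cases h : G.Adj v u <;> simp [h]
    simp_rw [h1, ← Finset.mul_sum, ch_rowsum G v]
    ring
  -- Step A : quadratic form bound
  have hQM : ∑ v, ∑ u, (if G.Adj v u then (g v - g u)^2 else 0) ≤ 2 * (lam * M) := by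
    have hsum : ∀ v : V, g v * ((G.degree v : ℝ) * f v - ∑ u, (if G.Adj v u then f u else 0))
        = lam * ((G.degree v : ℝ) * g v ^ 2) := by
      intro v
      rw [heq v, ← hgf v]
      ring
    have hsum2 : ∑ v, g v * ((G.degree v : ℝ) * f v - ∑ u, (if G.Adj v u then f u else 0))
        = lam * M := by
      rw [hMdef, Finset.mul_sum]
      exact Finset.sum_congr rfl fun v _ => hsum v
    have hexp : ∑ v, g v * ((G.degree v : ℝ) * f v - ∑ u, (if G.Adj v u then f u else 0))
        = M - ∑ v, ∑ u, (if G.Adj v u then g v * f u else 0) := by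
      simp_rw [mul_sub, Finset.mul_sum]
      rw [Finset.sum_sub_distrib]
      congr 1
      · rw [hMdef]
        refine Finset.sum_congr rfl fun v _ => ?_
        rw [← hgf v]; ring
      · refine Finset.sum_congr rfl fun v _ => Finset.sum_congr rfl fun u _ => ?_
        by_cases h : G.Adj v u <;> simp [h]
    have hCS : ∑ v, ∑ u, (if G.Adj v u then g v * f u else 0) = M - lam * M := by
      rw [hexp] at hsum2; linarith
    have hCSle : ∑ v, ∑ u, (if G.Adj v u then g v * f u else 0)
        ≤ ∑ v, ∑ u, (if G.Adj v u then g v * g u else 0) := by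
      refine Finset.sum_le_sum fun v _ => Finset.sum_le_sum fun u _ => ?_
      by_cases h : G.Adj v u
      · simp only [h, if_true]
        exact mul_le_mul_of_nonneg_left (hgle u) (hg0 v)
      · simp [h]
    have hkey := ch_key_identity G g
    have hsplit : ∑ v, ∑ u, (if G.Adj v u then g v * (g v - g u) else 0)
        = M - ∑ v, ∑ u, (if G.Adj v u then g v * g u else 0) := by
      rw [← hrowM, ← Finset.sum_sub_distrib]
      refine Finset.sum_congr rfl fun v _ => ?_
      rw [← Finset.sum_sub_distrib]
      refine Finset.sum_congr rfl fun u _ => ?_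
      by_cases h : G.Adj v u
      · simp only [h, if_true]; ring
      · simp [h]
    rw [hkey, hsplit]
    linarith
  -- Step B : Cauchy-Schwarz
  set B : ℝ := ∑ v, ∑ u, (if G.Adj v u then |g v ^ 2 - g u ^ 2| else 0) with hBdef
  have hB2 : B ^ 2 ≤ 4 * M * ∑ v, ∑ u, (if G.Adj v u then (g v - g u)^2 else 0) := by
    have hcs := Finset.sum_mul_sq_le_sq_mul_sq (Finset.univ ×ˢ Finset.univ)
      (fun z : V × V => if G.Adj z.1 z.2 then |g z.1 - g z.2| else 0)
      (fun z : V × V => if G.Adj z.1 z.2 then g z.1 + g z.2 else 0)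
    rw [Finset.sum_product, Finset.sum_product, Finset.sum_product] at hcs
    have h1 : ∑ v, ∑ u, ((if G.Adj v u then |g v - g u| else 0) *
        (if G.Adj v u then g v + g u else 0)) = B := by
      rw [hBdef]
      refine Finset.sum_congr rfl fun v _ => Finset.sum_congr rfl fun u _ => ?_
      by_cases h : G.Adj v u
      · simp only [h, if_true]
        rw [← abs_of_nonneg (add_nonneg (hg0 v) (hg0 u)), ← abs_mul]
        congr 1; ring
      · simp [h]
    have h2 : ∑ v, ∑ u, (if G.Adj v u then |g v - g u| else 0) ^ 2
        = ∑ v, ∑ u, (if G.Adj v u then (g v - g u)^2 else 0) := by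
      refine Finset.sum_congr rfl fun v _ => Finset.sum_congr rfl fun u _ => ?_
      by_cases h : G.Adj v u <;> simp [h, sq_abs]
    have h3 : ∑ v, ∑ u, (if G.Adj v u then g v + g u else 0) ^ 2 ≤ 4 * M := by
      have hle : ∀ v u : V, (if G.Adj v u then g v + g u else 0) ^ 2
          ≤ 2 * (if G.Adj v u then g v ^ 2 else 0) + 2 * (if G.Adj v u then g u ^ 2 else 0) := by
        intro v u
        by_cases h : G.Adj v u
        · simp only [h, if_true]
          nlinarith [sq_nonneg (g v - g u)]
        · simp [h]
      calc ∑ v, ∑ u, (if G.Adj v u then g v + g u else 0) ^ 2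
          ≤ ∑ v, ∑ u, (2 * (if G.Adj v u then g v ^ 2 else 0)
            + 2 * (if G.Adj v u then g u ^ 2 else 0)) :=
            Finset.sum_le_sum fun v _ => Finset.sum_le_sum fun u _ => hle v u
        _ = 4 * M := by
            simp_rw [Finset.sum_add_distrib, ← Finset.mul_sum]
            rw [ch_swap G (fun v u => g u ^ 2), hrowM]
            ring
    calc B ^ 2 ≤ (∑ v, ∑ u, (if G.Adj v u then |g v - g u| else 0) ^ 2)
          * ∑ v, ∑ u, (if G.Adj v u then g v + g u else 0) ^ 2 := by
          rw [← h1]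
          convert hcs using 2 <;> simp [Finset.pow_sum]
      _ ≤ (∑ v, ∑ u, (if G.Adj v u then (g v - g u)^2 else 0)) * (4 * M) := by
          rw [h2]
          refine mul_le_mul_of_nonneg_left h3 ?_
          refine Finset.sum_nonneg fun v _ => Finset.sum_nonneg fun u _ => ?_
          positivity
      _ = 4 * M * ∑ v, ∑ u, (if G.Adj v u then (g v - g u)^2 else 0) := by ring
  -- B as twice the positive parts
  have habs : ∀ x : ℝ, |x| = max x 0 + max (-x) 0 := by
    intro x
    rcases le_total 0 x with h | h
    · rw [abs_of_nonneg h, max_eq_left h, max_eq_right (by linarith : -x ≤ 0)]; ring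
    · rw [abs_of_nonpos h, max_eq_right h, max_eq_left (by linarith : (0:ℝ) ≤ -x)]; ring
  have hBmax : B = 2 * ∑ v, ∑ u, (if G.Adj v u then max (g v ^ 2 - g u ^ 2) 0 else 0) := by
    have hsplit : ∀ v u : V, (if G.Adj v u then |g v ^ 2 - g u ^ 2| else 0)
        = (if G.Adj v u then max (g v ^ 2 - g u ^ 2) 0 else 0)
          + (if G.Adj v u then max (g u ^ 2 - g v ^ 2) 0 else 0) := by
      intro v u
      by_cases h : G.Adj v u
      · simp only [h, if_true]
        rw [habs (g v ^ 2 - g u ^ 2), neg_sub]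
      · simp [h]
    rw [hBdef]
    simp_rw [hsplit, Finset.sum_add_distrib]
    rw [ch_swap G (fun v u => max (g u ^ 2 - g v ^ 2) 0)]
    ring
  -- Step C : integrals over the sweep
  obtain ⟨v₀, _, hv₀⟩ := Finset.exists_max_image Finset.univ (fun v => g v ^ 2)
    ⟨p, Finset.mem_univ p⟩
  set T : ℝ := g v₀ ^ 2 with hTdef
  have hgT : ∀ v, g v ^ 2 ≤ T := fun v => hv₀ v (Finset.mem_univ v)
  have hTpos : 0 < T := lt_of_lt_of_le (by positivity) (hgT p)
  set St : ℝ → Finset V := fun t => Finset.univ.filter (fun v => t < g v ^ 2) with hStdef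
  have hSmem : ∀ (t : ℝ) (v : V), v ∈ St t ↔ t < g v ^ 2 := by
    intro t v
    simp [hStdef]
  set F1 : ℝ → ℝ := fun t => ∑ v, ∑ u,
    (Set.Ico (g u ^ 2) (g v ^ 2)).indicator (fun _ => if G.Adj v u then (1:ℝ) else 0) t
    with hF1def
  set F2 : ℝ → ℝ := fun t => ∑ v,
    (Set.Ico (0:ℝ) (g v ^ 2)).indicator (fun _ => (G.degree v : ℝ)) t with hF2def
  have hF1 : ∀ t : ℝ, (edgeBoundary G (St t) : ℝ) = F1 t := by
    intro t
    rw [ch_Ecast, hF1def]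
    have hcompl : (St t)ᶜ = Finset.univ.filter (fun v => ¬ t < g v ^ 2) := by
      ext u
      simp [hStdef]
    rw [hcompl, hStdef]
    dsimp only
    rw [Finset.sum_filter]
    refine Finset.sum_congr rfl fun v _ => ?_
    rw [Finset.sum_filter]
    by_cases hv : t < g v ^ 2
    · rw [if_pos hv]
      refine Finset.sum_congr rfl fun u _ => ?_
      simp [Set.indicator_apply, Set.mem_Ico, hv, not_lt]
    · rw [if_neg hv]
      symm
      refine Finset.sum_eq_zero fun u _ => ?_
      simp [Set.indicator_apply, Set.mem_Ico, hv]
  have hF2 : ∀ t : ℝ, 0 ≤ t → (volume G (St t) : ℝ) = F2 t := by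
    intro t ht
    rw [ch_volcast, hF2def, hStdef]
    dsimp only
    rw [Finset.sum_filter]
    refine Finset.sum_congr rfl fun v _ => ?_
    simp [Set.indicator_apply, Set.mem_Ico, ht]
  have hconst : ∀ cc : ℝ, Integrable (fun _ : ℝ => cc)
      (MeasureTheory.volume.restrict (Set.Ioo (0:ℝ) T)) := by
    intro cc
    refine (MeasureTheory.integrableOn_const_iff (C := cc)).mpr (Or.inr ?_)
    rw [Real.volume_Ioo]
    exact ENNReal.ofReal_lt_top
  have hf1int : ∀ v u : V, Integrable
      ((Set.Ico (g u ^ 2) (g v ^ 2)).indicator (fun _ => if G.Adj v u then (1:ℝ) else 0))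
      (MeasureTheory.volume.restrict (Set.Ioo (0:ℝ) T)) :=
    fun v u => (hconst _).indicator measurableSet_Ico
  have hf2int : ∀ v : V, Integrable
      ((Set.Ico (0:ℝ) (g v ^ 2)).indicator (fun _ => (G.degree v : ℝ)))
      (MeasureTheory.volume.restrict (Set.Ioo (0:ℝ) T)) :=
    fun v => (hconst _).indicator measurableSet_Ico
  have hF1int : Integrable F1 (MeasureTheory.volume.restrict (Set.Ioo (0:ℝ) T)) := by
    rw [hF1def]
    exact MeasureTheory.integrable_finset_sum _ fun v _ =>
      MeasureTheory.integrable_finset_sum _ fun u _ => hf1int v u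
  have hF2int : Integrable F2 (MeasureTheory.volume.restrict (Set.Ioo (0:ℝ) T)) := by
    rw [hF2def]
    exact MeasureTheory.integrable_finset_sum _ fun v _ => hf2int v
  have hI1 : ∫ t in Set.Ioo (0:ℝ) T, F1 t
      = ∑ v, ∑ u, (if G.Adj v u then max (g v ^ 2 - g u ^ 2) 0 else 0) := by
    rw [hF1def]
    rw [MeasureTheory.integral_finset_sum _ (fun v _ =>
      MeasureTheory.integrable_finset_sum _ fun u _ => hf1int v u)]
    refine Finset.sum_congr rfl fun v _ => ?_
    rw [MeasureTheory.integral_finset_sum _ (fun u _ => hf1int v u)]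
    refine Finset.sum_congr rfl fun u _ => ?_
    rw [ch_int_indicator T _ _ _ (sq_nonneg _) (hgT v)]
    by_cases h : G.Adj v u <;> simp [h]
  have hI2 : ∫ t in Set.Ioo (0:ℝ) T, F2 t = M := by
    rw [hF2def]
    rw [MeasureTheory.integral_finset_sum _ (fun v _ => hf2int v)]
    rw [hMdef]
    refine Finset.sum_congr rfl fun v _ => ?_
    rw [ch_int_indicator T 0 _ _ le_rfl (hgT v), sub_zero, max_eq_left (sq_nonneg _)]
  -- the finite set of thresholds
  set W : Finset ℝ := Finset.univ.image (fun v => g v ^ 2) ∪ {0} with hWdef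
  have hWnn : ∀ w ∈ W, (0:ℝ) ≤ w := by
    intro w hw
    rcases Finset.mem_union.mp hw with h | h
    · obtain ⟨v, _, rfl⟩ := Finset.mem_image.mp h
      positivity
    · rw [Finset.mem_singleton.mp h]
  have h0W : (0:ℝ) ∈ W := Finset.mem_union_right _ (Finset.mem_singleton_self 0)
  set Wf : Finset ℝ := W.filter (fun w => w < T) with hWfdef
  have h0Wf : (0:ℝ) ∈ Wf := Finset.mem_filter.mpr ⟨h0W, hTpos⟩
  obtain ⟨w₀, hw₀f, hw₀min⟩ := Finset.exists_min_image Wf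
    (fun w => (edgeBoundary G (St w) : ℝ) / (volume G (St w) : ℝ)) ⟨0, h0Wf⟩
  set r : ℝ := (edgeBoundary G (St w₀) : ℝ) / (volume G (St w₀) : ℝ) with hrdef
  have hSsub : ∀ w : ℝ, 0 ≤ w → St w ⊆ Finset.univ.filter (fun v => 0 < f v) := by
    intro w hw0
    intro v hv
    have h1 : w < g v ^ 2 := (hSmem w v).mp hv
    have h2 : 0 < g v := by
      rcases eq_or_lt_of_le (hg0 v) with h | h
      · exfalso; rw [← h] at h1; simp at h1; linarith
      · exact h
    exact Finset.mem_filter.mpr ⟨Finset.mem_univ v, (hgpos_iff v).mp h2⟩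
  have hSne : ∀ w : ℝ, w < T → (St w).Nonempty :=
    fun w hw => ⟨v₀, (hSmem w v₀).mpr hw⟩
  have hSnuniv : ∀ w : ℝ, 0 ≤ w → St w ≠ Finset.univ := by
    intro w hw0 hEq
    have : w < g nn ^ 2 := (hSmem w nn).mp (hEq ▸ Finset.mem_univ nn)
    rw [hgnn] at this
    simp at this
    linarith
  have hvolpos : ∀ w : ℝ, w < T → 0 < (volume G (St w) : ℝ) := by
    intro w hw
    rw [ch_volcast]
    exact Finset.sum_pos (fun v _ => hd v) (hSne w hw)
  have hvolhalf : ∀ w : ℝ, 0 ≤ w → (volume G (St w) : ℝ) ≤ (volume G (St w)ᶜ : ℝ) := by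
    intro w hw0
    have h1 : volume G (St w) ≤ volume G (Finset.univ.filter (fun v => 0 < f v)) :=
      Finset.sum_le_sum_of_subset (hSsub w hw0)
    have h2 : (volume G (St w) : ℝ) + (volume G (St w)ᶜ : ℝ) = (volume G Finset.univ : ℝ) := by
      rw [ch_volcast, ch_volcast, ch_volcast]
      exact Finset.sum_add_sum_compl (St w) _
    have h1' : (volume G (St w) : ℝ) ≤ (volume G (Finset.univ.filter (fun v => 0 < f v)) : ℝ) :=
      Nat.cast_le.mpr h1
    have h3 : 2 * (volume G (Finset.univ.filter (fun v => 0 < f v)) : ℝ)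
        ≤ (volume G Finset.univ : ℝ) := by exact_mod_cast hvol
    linarith
  -- pointwise comparison on (0, T)
  have hpt : ∀ t ∈ Set.Ioo (0:ℝ) T, r * F2 t ≤ F1 t := by
    intro t ht
    obtain ⟨ht0, htT⟩ := ht
    have hfne : (W.filter (fun w => w ≤ t)).Nonempty :=
      ⟨0, Finset.mem_filter.mpr ⟨h0W, ht0.le⟩⟩
    set θ : ℝ := (W.filter (fun w => w ≤ t)).max' hfne with hθdef
    have hθmem := Finset.max'_mem _ hfne
    rw [← hθdef] at hθmem
    have hθW : θ ∈ W := (Finset.mem_filter.mp hθmem).1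
    have hθle : θ ≤ t := (Finset.mem_filter.mp hθmem).2
    have hθlt : θ < T := lt_of_le_of_lt hθle htT
    have hSeq : St t = St θ := by
      rw [hStdef]
      dsimp only
      refine Finset.filter_congr fun v _ => ?_
      constructor
      · intro h; exact lt_of_le_of_lt hθle h
      · intro h
        by_contra hh
        push_neg at hh
        have hgvW : g v ^ 2 ∈ W :=
          Finset.mem_union_left _ (Finset.mem_image_of_mem _ (Finset.mem_univ v))
        have : g v ^ 2 ≤ θ := by
          rw [hθdef]
          exact Finset.le_max' (W.filter (fun w => w ≤ t)) (g v ^ 2)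
            (Finset.mem_filter.mpr ⟨hgvW, hh⟩)
        linarith
    have hθWf : θ ∈ Wf := Finset.mem_filter.mpr ⟨hθW, hθlt⟩
    have hrle := hw₀min θ hθWf
    have hvp := hvolpos θ hθlt
    have hkey : r * (volume G (St θ) : ℝ) ≤ (edgeBoundary G (St θ) : ℝ) :=
      (le_div_iff₀ hvp).mp hrle
    rw [← hF1 t, ← hF2 t ht0.le, hSeq]
    exact hkey
  -- integral comparison
  have hcomp : r * M ≤ ∑ v, ∑ u, (if G.Adj v u then max (g v ^ 2 - g u ^ 2) 0 else 0) := by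
    rw [← hI1, ← hI2, ← MeasureTheory.integral_const_mul]
    exact MeasureTheory.setIntegral_mono_on (hF2int.const_mul r) hF1int measurableSet_Ioo hpt
  have hr0 : (0:ℝ) ≤ r := by
    rw [hrdef]
    exact div_nonneg (Nat.cast_nonneg _) (Nat.cast_nonneg _)
  -- final numeric combination
  have hfinal : r ^ 2 ≤ 2 * lam := by
    have e0 : (r * M) ^ 2 ≤ (∑ v, ∑ u, (if G.Adj v u then max (g v ^ 2 - g u ^ 2) 0 else 0)) ^ 2 :=
      pow_le_pow_left₀ (mul_nonneg hr0 hM.le) hcomp 2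
    set Smax : ℝ := ∑ v, ∑ u, (if G.Adj v u then max (g v ^ 2 - g u ^ 2) 0 else 0) with hSmax
    have e1 : 4 * (r * M) ^ 2 ≤ B ^ 2 := by
      rw [hBmax]
      calc 4 * (r * M) ^ 2 ≤ 4 * Smax ^ 2 := by linarith [e0]
        _ = (2 * Smax) ^ 2 := by ring
    have e2 : B ^ 2 ≤ 8 * lam * M ^ 2 := by
      have h4 : (0:ℝ) ≤ 4 * M := by linarith
      have h5 := mul_le_mul_of_nonneg_left hQM h4
      calc B ^ 2 ≤ 4 * M * (2 * (lam * M)) := le_trans hB2 h5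
        _ = 8 * lam * M ^ 2 := by ring
    have e3 : r ^ 2 * M ^ 2 ≤ 2 * lam * M ^ 2 := by
      have h6 : (r * M) ^ 2 = r ^ 2 * M ^ 2 := by ring
      linarith
    have hM2 : 0 < M ^ 2 := by positivity
    exact le_of_mul_le_mul_right e3 hM2
  -- conclusion
  have hw₀W := (Finset.mem_filter.mp hw₀f).1
  have hw₀T : w₀ < T := (Finset.mem_filter.mp hw₀f).2
  have hw₀0 : 0 ≤ w₀ := hWnn _ hw₀W
  refine ⟨St w₀, hSne w₀ hw₀T, hSnuniv w₀ hw₀0, ?_⟩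
  have hminvol : min (volume G (St w₀) : ℝ) (volume G (St w₀)ᶜ : ℝ) = (volume G (St w₀) : ℝ) :=
    min_eq_left (hvolhalf w₀ hw₀0)
  rw [hminvol, ← hrdef]
  exact hfinal

/-- Cheeger's inequality: for a finite connected graph `G` with positive Cheeger
constant `h(G)`, the spectral gap `λ` of the normalized Laplacian
`L̃ = I - D^{-1/2} A D^{-1/2}` (its second-smallest eigenvalue, i.e. the smallest
nonzero eigenvalue) satisfies `h(G)²/2 ≤ λ ≤ 2 h(G)`. -/
theorem cheeger_inequality (G : SimpleGraph V) [DecidableRel G.Adj] [Nontrivial V]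
    (hconn : G.Connected) (hpos : 0 < cheegerConst G)
    (lam : ℝ)
    (normL : Matrix V V ℝ)
    (hnormL : normL = 1 - Matrix.of fun u v =>
      (G.adjMatrix ℝ) u v / Real.sqrt ((G.degree u : ℝ) * (G.degree v : ℝ)))
    (heig : ∃ x : V → ℝ, x ≠ 0 ∧ normL.mulVec x = lam • x)
    (hne : lam ≠ 0)
    (hmin : ∀ (μ : ℝ) (x : V → ℝ), x ≠ 0 → normL.mulVec x = μ • x → μ ≠ 0 → lam ≤ μ) :
    cheegerConst G ^ 2 / 2 ≤ lam ∧ lam ≤ 2 * cheegerConst G := by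
  classical
  have hdeg : ∀ v : V, 0 < G.degree v := ch_deg_pos G hconn
  have hd : ∀ w : V, 0 < (G.degree w : ℝ) := fun w => by exact_mod_cast hdeg w
  obtain ⟨x, hx0, hx⟩ := heig
  set f : V → ℝ := fun v => x v / Real.sqrt (G.degree v) with hfdef
  have hfeq : ∀ v, (G.degree v : ℝ) * f v - ∑ u, (if G.Adj v u then f u else 0)
      = lam * ((G.degree v : ℝ) * f v) := fun v => ch_eigen G hd hnormL hx v
  have hf0 : ∃ v, f v ≠ 0 := by
    obtain ⟨v, hv⟩ := Function.ne_iff.mp hx0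
    refine ⟨v, ?_⟩
    rw [hfdef]
    exact div_ne_zero hv (ne_of_gt (Real.sqrt_pos.mpr (hd v)))
  -- orthogonality: ∑ d v * f v = 0
  have horthf : ∑ v, (G.degree v : ℝ) * f v = 0 := by
    have hsum : ∑ v, ((G.degree v : ℝ) * f v - ∑ u, (if G.Adj v u then f u else 0))
        = lam * ∑ v, (G.degree v : ℝ) * f v := by
      rw [Finset.mul_sum]
      exact Finset.sum_congr rfl fun v _ => hfeq v
    have hswap : ∑ v, ∑ u, (if G.Adj v u then f u else 0)
        = ∑ v, (G.degree v : ℝ) * f v := by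
      rw [ch_swap G (fun v u => f u)]
      refine Finset.sum_congr rfl fun v _ => ?_
      have h1 : ∀ u : V, (if G.Adj v u then f v else 0)
          = f v * (if G.Adj v u then (1:ℝ) else 0) := by
        intro u; by_cases h : G.Adj v u <;> simp [h]
      simp_rw [h1, ← Finset.mul_sum, ch_rowsum G v]
      ring
    rw [Finset.sum_sub_distrib, hswap, sub_self] at hsum
    have := hsum.symm
    rcases mul_eq_zero.mp this with h | h
    · exact absurd h hne
    · exact h
  -- both signs occur
  have hfpos : ∃ v, 0 < f v := by
    by_contra hno
    push_neg at hno
    obtain ⟨v1, hv1⟩ := hf0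
    have hterm : ∀ v ∈ Finset.univ, (G.degree v : ℝ) * f v ≤ 0 :=
      fun v _ => mul_nonpos_of_nonneg_of_nonpos (hd v).le (hno v)
    have := (Finset.sum_eq_zero_iff_of_nonpos hterm).mp horthf v1 (Finset.mem_univ v1)
    rcases mul_eq_zero.mp this with h | h
    · exact absurd h (ne_of_gt (hd v1))
    · exact hv1 h
  have hfneg : ∃ v, f v < 0 := by
    by_contra hno
    push_neg at hno
    obtain ⟨v1, hv1⟩ := hf0
    have hterm : ∀ v ∈ Finset.univ, 0 ≤ (G.degree v : ℝ) * f v :=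
      fun v _ => mul_nonneg (hd v).le (hno v)
    have := (Finset.sum_eq_zero_iff_of_nonneg hterm).mp horthf v1 (Finset.mem_univ v1)
    rcases mul_eq_zero.mp this with h | h
    · exact absurd h (ne_of_gt (hd v1))
    · exact hv1 h
  -- the set defining the Cheeger constant
  set cSet : Set ℝ := {r : ℝ | ∃ S : Finset V, S.Nonempty ∧ S ≠ Finset.univ ∧
    r = (edgeBoundary G S : ℝ) / min (volume G S : ℝ) (volume G Sᶜ : ℝ)} with hcSet
  have hcheeger : cheegerConst G = sInf cSet := rfl
  have hbdd : BddBelow cSet := by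
    refine ⟨0, fun r hr => ?_⟩
    obtain ⟨S, _, _, rfl⟩ := hr
    refine div_nonneg (Nat.cast_nonneg _) (le_min (Nat.cast_nonneg _) (Nat.cast_nonneg _))
  have hcne : cSet.Nonempty := by
    obtain ⟨v, u, hvu⟩ := exists_pair_ne V
    refine ⟨_, ⟨{v}, ⟨v, Finset.mem_singleton_self v⟩, ?_, rfl⟩⟩
    intro h
    exact hvu (Finset.mem_singleton.mp (h ▸ Finset.mem_univ u)).symm
  constructor
  · -- lower bound : h² / 2 ≤ lam
    -- choose the side with smaller volume
    set P : Finset V := Finset.univ.filter (fun v => 0 < f v) with hPdef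
    set N : Finset V := Finset.univ.filter (fun v => f v < 0) with hNdef
    have hPN : ∀ S₀ : Finset V, (∃ T₀, T₀ ⊆ S₀ᶜ ∧ volume G S₀ ≤ volume G T₀) →
        2 * volume G S₀ ≤ volume G Finset.univ := by
      intro S₀ ⟨T₀, hT₀sub, hT₀vol⟩
      have h1 : volume G T₀ ≤ volume G S₀ᶜ := Finset.sum_le_sum_of_subset hT₀sub
      have h2 : volume G S₀ + volume G S₀ᶜ = volume G Finset.univ :=
        Finset.sum_add_sum_compl S₀ _
      omega
    obtain ⟨S, hSne, hSnuniv, hSbound⟩ :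
        ∃ S : Finset V, S.Nonempty ∧ S ≠ Finset.univ ∧
          ((edgeBoundary G S : ℝ) / min (volume G S : ℝ) (volume G Sᶜ : ℝ))^2 ≤ 2 * lam := by
      rcases le_total (volume G P) (volume G N) with hle | hle
      · refine ch_lower G hdeg f hfeq hfpos hfneg ?_
        refine hPN _ ⟨N, ?_, hle⟩
        intro v hv
        rw [Finset.mem_compl]
        have hfv : f v < 0 := (Finset.mem_filter.mp hv).2
        simp only [Finset.mem_filter, Finset.mem_univ, true_and, not_lt]
        linarith
      · have hfeq' : ∀ v, (G.degree v : ℝ) * (-f) v - ∑ u, (if G.Adj v u then (-f) u else 0)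
            = lam * ((G.degree v : ℝ) * (-f) v) := by
          intro v
          have h := hfeq v
          have hsn : ∑ u, (if G.Adj v u then (-f) u else 0)
              = - ∑ u, (if G.Adj v u then f u else 0) := by
            rw [← Finset.sum_neg_distrib]
            refine Finset.sum_congr rfl fun u _ => ?_
            by_cases hadj : G.Adj v u <;> simp [hadj]
          rw [hsn]
          simp only [Pi.neg_apply]
          linear_combination -h
        have hP' : Finset.univ.filter (fun v => 0 < (-f) v) = N := by
          rw [hNdef]
          refine Finset.filter_congr fun v _ => ?_
          simp only [Pi.neg_apply, neg_pos]
        refine ch_lower G hdeg (-f) hfeq' ?_ ?_ ?_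
        · obtain ⟨v, hv⟩ := hfneg
          exact ⟨v, by simpa using hv⟩
        · obtain ⟨v, hv⟩ := hfpos
          exact ⟨v, by simpa using hv⟩
        · rw [hP']
          refine hPN _ ⟨P, ?_, hle⟩
          intro v hv
          rw [Finset.mem_compl]
          have hfv : 0 < f v := (Finset.mem_filter.mp hv).2
          simp only [hNdef, Finset.mem_filter, Finset.mem_univ, true_and, not_lt]
          linarith
    have hmem : (edgeBoundary G S : ℝ) / min (volume G S : ℝ) (volume G Sᶜ : ℝ) ∈ cSet :=
      ⟨S, hSne, hSnuniv, rfl⟩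
    have hle : cheegerConst G ≤ (edgeBoundary G S : ℝ)
        / min (volume G S : ℝ) (volume G Sᶜ : ℝ) := csInf_le hbdd hmem
    have hsq : cheegerConst G ^ 2
        ≤ ((edgeBoundary G S : ℝ) / min (volume G S : ℝ) (volume G Sᶜ : ℝ)) ^ 2 :=
      pow_le_pow_left₀ hpos.le hle 2
    linarith
  · -- upper bound : lam ≤ 2 h
    have hlow : ∀ r ∈ cSet, lam / 2 ≤ r := by
      intro r hr
      obtain ⟨S, hSne, hSnuniv, rfl⟩ := hr
      have := ch_upper G hconn hdeg hnormL hmin S hSne hSnuniv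
      linarith
    have := le_csInf hcne hlow
    rw [hcheeger]
    linarith
end
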